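/- Let Σ be a finite connected simple graph that is regular of valency 4, let G ≤ Aut(Σ) be arc-transitive on Σ, and let (ω, ω') be an ordered pair of adjacent vertices with vertex stabilizer G_ω a (finite) 2-group with |G_ω| ≥ 16. Let g ∈ G satisfy g·ω = ω', g·ω' = ω and g² ∈ G_ω^{[1]}, and let x ∈ G_ω \ G_{ωω'} and y ∈ G_{ω'}^{[1]} \ G_ω^{[1]} satisfy G_ω = ⟨G_ω^{[1]}, x, y⟩, G_ω^{[1]} = ⟨G_ω^{[1]} ∩ G_{ω'}^{[1]}, g⁻¹yg⟩, and (xy)² ∈ G_ω^{[1]} (such g, x, y exist by Lemma 6.3). Set L = ⟨G_ω^{[1]}, xy⟩. Then: (i) ⟨L, g⟩ = G; (ii) L ∩ g⁻¹Lg = G_ω^{[1]} ∩ G_{ω'}^{[1]} and |L : L ∩ g⁻¹Lg| = 4; (iii) L·G_{ωω'} ≠ G_ω (equivalently, L is intransitive on Σ(ω)). Consequently the coset graph Cos(G, L, LgL) is a connected tetravalent G-symmetric pseudocover of Σ. -/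

import Mathlib

open scoped Pointwise

section Aux

variable {G : Type*} [Group G]

lemma mem_closure_coset (K : Subgroup G) (t : G)
    (hc : ∀ k ∈ K, t * k * t⁻¹ ∈ K) (hc' : ∀ k ∈ K, t⁻¹ * k * t ∈ K)
    (ht2 : t ^ 2 ∈ K) (z : G) :
    z ∈ Subgroup.closure ((K : Set G) ∪ {t}) ↔ z ∈ K ∨ ∃ k ∈ K, z = k * t := by
  constructor
  · intro hz
    refine Subgroup.closure_induction (k := (K : Set G) ∪ {t})
      (p := fun z _ => z ∈ K ∨ ∃ k ∈ K, z = k * t) ?_ ?_ ?_ ?_ hz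
    · rintro a (ha | rfl)
      · exact Or.inl ha
      · exact Or.inr ⟨1, one_mem K, (one_mul _).symm⟩
    · exact Or.inl (one_mem K)
    · rintro a b _ _ (ha | ⟨k, hk, rfl⟩) (hb | ⟨k', hk', rfl⟩)
      · exact Or.inl (mul_mem ha hb)
      · exact Or.inr ⟨a * k', mul_mem ha hk', (mul_assoc _ _ _).symm⟩
      · refine Or.inr ⟨k * (t * b * t⁻¹), mul_mem hk (hc b hb), ?_⟩
        group
      · refine Or.inl ?_
        have : k * t * (k' * t) = k * (t * k' * t⁻¹) * t ^ 2 := by group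
        rw [this]
        exact mul_mem (mul_mem hk (hc _ hk')) ht2
    · rintro a _ (ha | ⟨k, hk, rfl⟩)
      · exact Or.inl (inv_mem ha)
      · refine Or.inr ⟨t⁻¹ * k⁻¹ * t * (t ^ 2)⁻¹, mul_mem (hc' _ (inv_mem hk)) (inv_mem ht2), ?_⟩
        group
  · rintro (hz | ⟨k, hk, rfl⟩)
    · exact Subgroup.subset_closure (Or.inl hz)
    · exact mul_mem (Subgroup.subset_closure (Or.inl hk))
        (Subgroup.subset_closure (Or.inr rfl))

lemma relindex_two (A B : Subgroup G) (t : G) (htB : t ∈ B) (htA : t ∉ A)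
    (ht2 : t ^ 2 ∈ A) (hdec : ∀ b ∈ B, b ∈ A ∨ ∃ a ∈ A, b = a * t) :
    A.relIndex B = 2 := by
  rw [Subgroup.relIndex]
  rw [Subgroup.index_eq_two_iff]
  refine ⟨⟨t, htB⟩, fun b => ?_⟩
  rcases hdec b b.2 with hb | ⟨a, ha, hab⟩
  · refine Or.inr ⟨hb, ?_⟩
    intro hbt
    have h1 : (b : G) * t ∈ A := hbt
    have h2 : t ∈ A := by
      have := mul_mem (inv_mem hb) h1
      rwa [inv_mul_cancel_left] at this
    exact htA h2
  · refine Or.inl ⟨?_, ?_⟩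
    · show (b : G) * t ∈ A
      rw [hab, mul_assoc, ← pow_two]
      exact mul_mem ha ht2
    · intro hbA
      have : (a : G)⁻¹ * b ∈ A := mul_mem (inv_mem ha) hbA
      rw [hab, inv_mul_cancel_left] at this
      exact htA this

variable {V : Type*} [MulAction G V]

lemma smul_sq_fix (y : G) (u : V) (k : ℕ) (hy : y ^ 2 ^ k = 1)
    (S : Set V) (hfin : S.Finite) (hS : S.ncard ≤ 3) (hmem : ∀ n : ℕ, y ^ n • u ∈ S) :
    y ^ 2 • u = u := by
  have hmaps : ∀ i : Fin 4, (y ^ (i : ℕ) • u) ∈ hfin.toFinset := by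
    intro i; simpa using hmem i
  have hcard : hfin.toFinset.card < Finset.univ.card (α := Fin 4) := by
    have h1 : S.ncard = hfin.toFinset.card := Set.ncard_eq_toFinset_card S hfin
    simp only [Finset.card_univ, Fintype.card_fin]
    omega
  obtain ⟨i, -, j, -, hij, hfij⟩ :=
    Finset.exists_ne_map_eq_of_card_lt_of_maps_to hcard (fun i _ => hmaps i)
  have key : ∀ i j : Fin 4, (i:ℕ) < (j:ℕ) → y ^ (i:ℕ) • u = y ^ (j:ℕ) • u → y ^ 2 • u = u := by
    clear hij hfij i j
    intro i j hlt hfij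
    set d : ℕ := (j : ℕ) - (i : ℕ) with hd
    have hdu : y ^ d • u = u := by
      have : y ^ ((i:ℕ) + d) • u = y ^ (i:ℕ) • u := by
        rw [show (i:ℕ) + d = (j:ℕ) by omega]
        exact hfij.symm
      rw [pow_add, mul_smul] at this
      exact smul_left_cancel _ this
    have hd1 : 1 ≤ d := by omega
    have hd3 : d ≤ 3 := by omega
    interval_cases d
    · rw [pow_one] at hdu
      rw [pow_two, mul_smul, hdu, hdu]
    · exact hdu
    · have h3 : y ^ (3:ℕ) ∈ MulAction.stabilizer G u := hdu
      have hy1 : y ∈ MulAction.stabilizer G u := by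
        have hcop : Nat.Coprime 3 (2 ^ k) := Nat.Coprime.pow_right k (by decide)
        obtain ⟨a, b, hab⟩ : ∃ a b : ℤ, 3 * a + (2:ℤ) ^ k * b = 1 := by
          have := Nat.gcd_eq_gcd_ab 3 (2 ^ k)
          refine ⟨Nat.gcdA 3 (2 ^ k), Nat.gcdB 3 (2 ^ k), ?_⟩
          rw [hcop] at this
          push_cast at this ⊢
          omega
        have : y = (y ^ (3:ℕ)) ^ a * (y ^ (2 ^ k)) ^ b := by
          rw [← zpow_natCast y 3, ← zpow_natCast y (2 ^ k), ← zpow_mul, ← zpow_mul,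
            ← zpow_add]
          rw [show ((3:ℕ):ℤ) * a + ((2 ^ k : ℕ):ℤ) * b = 1 by push_cast; linarith, zpow_one]
        rw [this, hy]
        simpa using Subgroup.zpow_mem _ h3 a
      rw [pow_two, mul_smul, hy1, hy1]
  rcases Nat.lt_or_ge (i:ℕ) (j:ℕ) with h | h
  · exact key i j h hfij
  · have : (j:ℕ) < (i:ℕ) := by
      rcases Nat.lt_or_ge (j:ℕ) (i:ℕ) with h' | h'
      · exact h'
      · exact absurd (Fin.ext (by omega)) hij
    exact key j i this hfij.symm

end Aux

/-- The pointwise stabilizer `G_ω^{[1]}` of the neighbourhood of `ω` within the vertex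
stabilizer `G_ω`: the subgroup of elements fixing `ω` and all of its neighbours. -/
def pstab {V : Type*} (Sg : SimpleGraph V) (G : Type*) [Group G] [MulAction G V] (ω : V) :
    Subgroup G :=
  MulAction.stabilizer G ω ⊓ ⨅ v ∈ Sg.neighborSet ω, MulAction.stabilizer G v

/-- The conjugate subgroup `H^g = g⁻¹ H g`. -/
def conjSG {G : Type*} [Group G] (H : Subgroup G) (g : G) : Subgroup G :=
  Subgroup.comap (MulAut.conj g).toMonoidHom H

/-- membership of the double coset `H g H`. -/
def inDC {G : Type*} [Group G] (H : Subgroup G) (g z : G) : Prop :=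
  ∃ h ∈ H, ∃ h' ∈ H, z = h * g * h'

/-- The coset graph `Cos(G,H,HgH)` on the coset space `G/H`: distinct cosets `xH` and `yH`
are adjacent iff `x⁻¹y ∈ HgH`.  (The symmetrised form of the adjacency relation below is
equal to this condition whenever `g² ∈ H`, since then `(HgH)⁻¹ = HgH`.) -/
def cosetGraph {G : Type*} [Group G] (H : Subgroup G) (g : G) : SimpleGraph (G ⧸ H) where
  Adj a b := a ≠ b ∧ ∃ x y : G, (x : G ⧸ H) = a ∧ (y : G ⧸ H) = b ∧
      (inDC H g (x⁻¹ * y) ∨ inDC H g (y⁻¹ * x))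
  symm := by
    constructor
    rintro a b ⟨hne, x, y, hx, hy, h⟩
    exact ⟨hne.symm, y, x, hy, hx, h.symm⟩
  loopless := by
    constructor
    rintro a ⟨hne, -⟩
    exact hne rfl

section PstabLemmas

variable {V : Type*} {G : Type*} [Group G] [MulAction G V] (Sg : SimpleGraph V)

lemma mem_pstab {z : G} {v : V} :
    z ∈ pstab Sg G v ↔ z • v = v ∧ ∀ u : V, Sg.Adj v u → z • u = u := by
  simp [pstab, Subgroup.mem_inf, Subgroup.mem_iInf, MulAction.mem_stabilizer_iff,
    SimpleGraph.mem_neighborSet]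

lemma mem_conjSG {H : Subgroup G} {g z : G} : z ∈ conjSG H g ↔ g * z * g⁻¹ ∈ H := by
  simp [conjSG]

variable (hact : ∀ (g : G) (a b : V), Sg.Adj (g • a) (g • b) ↔ Sg.Adj a b)

include hact in
lemma pstab_conj (a : G) (v : V) (z : G) :
    a * z * a⁻¹ ∈ pstab Sg G (a • v) ↔ z ∈ pstab Sg G v := by
  rw [mem_pstab, mem_pstab]
  constructor
  · rintro ⟨h1, h2⟩
    constructor
    · have : (a * z * a⁻¹) • (a • v) = a • (z • v) := by
        simp [mul_smul]
      rw [this] at h1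
      exact smul_left_cancel a h1
    · intro u hu
      have hadj : Sg.Adj (a • v) (a • u) := (hact a v u).mpr hu
      have h3 := h2 _ hadj
      have : a • (z • u) = a • u := by
        simpa [mul_smul] using h3
      exact smul_left_cancel a this
  · rintro ⟨h1, h2⟩
    constructor
    · simp [mul_smul, h1]
    · intro u hu
      have hadj : Sg.Adj v (a⁻¹ • u) := by
        have := hact a v (a⁻¹ • u)
        rw [smul_inv_smul] at this
        exact this.mp hu
      have h3 := h2 _ hadj
      calc (a * z * a⁻¹) • u = a • z • a⁻¹ • u := by simp [mul_smul]
        _ = a • a⁻¹ • u := by rw [h3]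
        _ = u := by simp

lemma pstab_smul_mem {z : G} {v : V} (hz : z ∈ pstab Sg G v) {u : V} (hu : Sg.Adj v u) :
    z • u = u := ((mem_pstab Sg).mp hz).2 u hu

lemma pstab_fix {z : G} {v : V} (hz : z ∈ pstab Sg G v) : z • v = v :=
  ((mem_pstab Sg).mp hz).1

end PstabLemmas

/-- **Lemma 6.5 (Construction 6.4 produces pseudocovers).**
With `Sg` a finite connected tetravalent graph, `G ≤ Aut Sg` arc-transitive, `(ω, ω')`
an arc, `G_ω` a `2`-group of order at least `16`, `g` interchanging `ω, ω'` with
`g² ∈ G_ω^{[1]}`, and `x, y` as in Lemma 6.3, set `L = ⟨G_ω^{[1]}, xy⟩`.  Then: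
(i) `⟨L, g⟩ = G`;
(ii) `L ∩ L^g = G_ω^{[1]} ∩ G_{ω'}^{[1]}` and `|L : L ∩ L^g| = 4`;
(iii) `L · G_{ωω'} ≠ G_ω` (i.e. `L` is intransitive on `Sg(ω)`).
Consequently the coset graph `Cos(G, L, LgL)` is a connected tetravalent `G`-symmetric
graph; by the criterion of Theorem 1.2, (i)–(iii) say exactly that it is a
pseudocover of `Sg`. -/
theorem tetravalent_pseudocover_construction {V : Type*} [Fintype V] (Sg : SimpleGraph V)
    {G : Type*} [Group G] [MulAction G V] [FaithfulSMul G V]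
    (hact : ∀ (g : G) (a b : V), Sg.Adj (g • a) (g • b) ↔ Sg.Adj a b)
    (hconn : Sg.Connected)
    (hval : ∀ v : V, (Sg.neighborSet v).ncard = 4)
    (harc : ∀ a b c d : V, Sg.Adj a b → Sg.Adj c d → ∃ g : G, g • a = c ∧ g • b = d)
    (ω ω' : V) (hadj : Sg.Adj ω ω')
    (h2 : IsPGroup 2 (MulAction.stabilizer G ω))
    (hbig : 16 ≤ Nat.card (MulAction.stabilizer G ω))
    (g : G) (hgω : g • ω = ω') (hgω' : g • ω' = ω) (hg2 : g ^ 2 ∈ pstab Sg G ω)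
    (x y : G)
    (hx : x ∈ MulAction.stabilizer G ω)
    (hx' : x ∉ MulAction.stabilizer G ω ⊓ MulAction.stabilizer G ω')
    (hy : y ∈ pstab Sg G ω') (hy' : y ∉ pstab Sg G ω)
    (hgen : MulAction.stabilizer G ω = Subgroup.closure ((pstab Sg G ω : Set G) ∪ {x, y}))
    (hker : pstab Sg G ω =
      Subgroup.closure (((pstab Sg G ω ⊓ pstab Sg G ω') : Set G) ∪ {g⁻¹ * y * g}))
    (hxy : (x * y) ^ 2 ∈ pstab Sg G ω)
    (L : Subgroup G) (hL : L = Subgroup.closure ((pstab Sg G ω : Set G) ∪ {x * y})) :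
    Subgroup.closure ((L : Set G) ∪ {g}) = ⊤ ∧
    (L ⊓ conjSG L g = pstab Sg G ω ⊓ pstab Sg G ω' ∧ (conjSG L g).relIndex L = 4) ∧
    (L : Set G) * ((MulAction.stabilizer G ω ⊓ MulAction.stabilizer G ω' : Subgroup G) : Set G)
      ≠ (MulAction.stabilizer G ω : Set G) ∧
    (cosetGraph L g).Connected ∧
    (∀ v : G ⧸ L, ((cosetGraph L g).neighborSet v).ncard = 4) := by
  set K : Subgroup G := pstab Sg G ω with hKdef
  set K' : Subgroup G := pstab Sg G ω' with hK'def
  set N : Subgroup G := K ⊓ K' with hNdef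
  set w : G := g⁻¹ * y * g with hwdef
  -- basic point facts
  have hne : ω ≠ ω' := Sg.ne_of_adj hadj
  have hxω : x • ω = ω := hx
  have hxω' : x • ω' ≠ ω' := by
    intro h
    exact hx' (Subgroup.mem_inf.mpr ⟨hx, h⟩)
  have hyω' : y • ω' = ω' := pstab_fix Sg hy
  have hyω : y • ω = ω := pstab_smul_mem Sg hy hadj.symm
  have hystab : y ∈ MulAction.stabilizer G ω := hyω
  have hxadj : Sg.Adj ω (x • ω') := by
    have := (hact x ω ω').mpr hadj
    rwa [hxω] at this
  -- conjugation facts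
  have hconjK : ∀ z : G, g * z * g⁻¹ ∈ K' ↔ z ∈ K := by
    intro z
    have := pstab_conj Sg hact g ω z
    rwa [hgω] at this
  have hconjK' : ∀ z : G, g * z * g⁻¹ ∈ K ↔ z ∈ K' := by
    intro z
    have := pstab_conj Sg hact g ω' z
    rwa [hgω'] at this
  have hwK : w ∈ K := by
    rw [hker]
    exact Subgroup.subset_closure (Or.inr rfl)
  have hgwg : g * w * g⁻¹ = y := by rw [hwdef]; group
  have hwK' : w ∉ K' := by
    intro h
    have : g * w * g⁻¹ ∈ K := (hconjK' w).mpr h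
    rw [hgwg] at this
    exact hy' this
  have hwN : w ∉ N := fun h => hwK' (Subgroup.mem_inf.mp h).2
  have hwω : w • ω = ω := by
    exact pstab_fix Sg hwK
  have hwω' : w • ω' = ω' := pstab_smul_mem Sg hwK hadj
  -- y^2 ∈ K
  have hy2K : y ^ 2 ∈ K := by
    obtain ⟨k, hk⟩ := h2 ⟨y, hystab⟩
    have hyk : y ^ 2 ^ k = 1 := by
      have := congrArg (Subtype.val) hk
      simpa using this
    rw [hKdef, mem_pstab]

    have hy2ω : y ^ 2 • ω = ω := by
      rw [pow_two, mul_smul, hyω, hyω]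
    refine ⟨hy2ω, ?_⟩
    intro u hu
    by_cases huω' : u = ω'
    · rw [huω', pow_two, mul_smul, hyω', hyω']
    · have hynstab : ∀ n : ℕ, y ^ n ∈ MulAction.stabilizer G ω := fun n => pow_mem hystab n
      have hynstab' : ∀ n : ℕ, y ^ n ∈ MulAction.stabilizer G ω' := fun n => pow_mem hyω' n
      refine smul_sq_fix y u k hyk (Sg.neighborSet ω \ {ω'}) (Set.toFinite _) ?_ ?_
      · have h4 : (Sg.neighborSet ω).ncard = 4 := hval ω
        have h5 : ((Sg.neighborSet ω) \ {ω'}).ncard = (Sg.neighborSet ω).ncard - 1 :=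
          Set.ncard_diff_singleton_of_mem (by exact hadj)
        omega
      · intro n
        constructor
        · have := (hact (y ^ n) ω u).mpr hu
          rwa [hynstab n] at this
        · intro hcon
          have : y ^ n • u = y ^ n • ω' := by
            rw [hynstab' n]
            simpa using hcon
          exact huω' (smul_left_cancel _ this)
  have hw2N : w ^ 2 ∈ N := by
    refine Subgroup.mem_inf.mpr ⟨pow_mem hwK 2, ?_⟩
    have heq : g * w ^ 2 * g⁻¹ = y ^ 2 := by rw [hwdef, pow_two, pow_two]; group
    have h := hconjK' (w ^ 2)
    rw [heq] at h
    exact h.mp hy2K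
  -- decomposition of K = N ∪ N w
  have hKdec : ∀ z : G, z ∈ K ↔ z ∈ N ∨ ∃ n ∈ N, z = n * w := by
    intro z
    rw [hker]
    refine mem_closure_coset N w ?_ ?_ hw2N z
    · intro n hn
      obtain ⟨hn1, hn2⟩ := Subgroup.mem_inf.mp hn
      refine Subgroup.mem_inf.mpr ⟨?_, ?_⟩
      · have := pstab_conj Sg hact w ω n
        rw [hwω] at this
        exact this.mpr hn1
      · have := pstab_conj Sg hact w ω' n
        rw [hwω'] at this
        exact this.mpr hn2
    · intro n hn
      obtain ⟨hn1, hn2⟩ := Subgroup.mem_inf.mp hn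
      have hwinvω : w⁻¹ • ω = ω := by
        rw [inv_smul_eq_iff]; exact hwω.symm
      have hwinvω' : w⁻¹ • ω' = ω' := by
        rw [inv_smul_eq_iff]; exact hwω'.symm
      refine Subgroup.mem_inf.mpr ⟨?_, ?_⟩
      · have := pstab_conj Sg hact w⁻¹ ω n
        rw [hwinvω, inv_inv] at this
        exact this.mpr hn1
      · have := pstab_conj Sg hact w⁻¹ ω' n
        rw [hwinvω', inv_inv] at this
        exact this.mpr hn2
  -- facts about xy
  have hxyω : (x * y) • ω = ω := by rw [mul_smul, hyω, hxω]
  have hxyK : x * y ∉ K := by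
    intro h
    have := pstab_smul_mem Sg h hadj
    rw [mul_smul, hyω'] at this
    exact hxω' this
  -- decomposition of L = K ∪ K xy
  have hLdec : ∀ z : G, z ∈ L ↔ z ∈ K ∨ ∃ kk ∈ K, z = kk * (x * y) := by
    intro z
    rw [hL]
    refine mem_closure_coset K (x * y) ?_ ?_ hxy z
    · intro kk hk
      have := pstab_conj Sg hact (x * y) ω kk
      rw [hxyω] at this
      exact this.mpr hk
    · intro kk hk
      have hxyinvω : (x * y)⁻¹ • ω = ω := by rw [inv_smul_eq_iff]; exact hxyω.symm
      have := pstab_conj Sg hact (x * y)⁻¹ ω kk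
      rw [hxyinvω, inv_inv] at this
      exact this.mpr hk
  have hKL : K ≤ L := fun z hz => (hLdec z).mpr (Or.inl hz)
  have hNK : N ≤ K := inf_le_left
  have hLstab : L ≤ MulAction.stabilizer G ω := by
    intro z hz
    rcases (hLdec z).mp hz with hz | ⟨kk, hk, rfl⟩
    · exact pstab_fix Sg hz
    · have : (kk * (x * y)) • ω = ω := by
        rw [mul_smul, hxyω]
        exact pstab_fix Sg hk
      exact this
  have hgL : g ∉ L := by
    intro h
    have : g • ω = ω := hLstab h
    rw [hgω] at this
    exact hne this.symm
  -- N is g-invariant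
  have hgNmem : ∀ n ∈ N, g * n * g⁻¹ ∈ N := by
    intro n hn
    obtain ⟨hn1, hn2⟩ := Subgroup.mem_inf.mp hn
    exact Subgroup.mem_inf.mpr ⟨(hconjK' n).mpr hn2, (hconjK n).mpr hn1⟩
  have hgNmem' : ∀ n ∈ N, g⁻¹ * n * g ∈ N := by
    intro n hn
    have h1 : g * (g⁻¹ * n * g) * g⁻¹ = n := by group
    obtain ⟨hn1, hn2⟩ := Subgroup.mem_inf.mp hn
    refine Subgroup.mem_inf.mpr ⟨?_, ?_⟩
    · refine (hconjK (g⁻¹ * n * g)).mp ?_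
      rw [h1]; exact hn2
    · refine (hconjK' (g⁻¹ * n * g)).mp ?_
      rw [h1]; exact hn1
  -- the key computation:  nothing of the form k·xy conjugated lies in L, etc.
  have hkxyω' : ∀ kk ∈ K, (kk * (x * y)) • ω' = x • ω' := by
    intro kk hk
    rw [mul_smul, mul_smul, hyω']
    exact pstab_smul_mem Sg hk hxadj
  -- (ii) first part
  have hLLg : L ⊓ conjSG L g = N := by
    apply le_antisymm
    · rintro u hu
      obtain ⟨huL, huc⟩ := Subgroup.mem_inf.mp hu
      have hguL : g * u * g⁻¹ ∈ L := mem_conjSG.mp huc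
      rcases (hLdec _).mp hguL with hK1 | ⟨kk, hk, hkeq⟩
      · -- g u g⁻¹ ∈ K, so u ∈ K'
        have huK' : u ∈ K' := (hconjK' u).mp hK1
        rcases (hLdec u).mp huL with hK2 | ⟨kk, hk, rfl⟩
        · exact Subgroup.mem_inf.mpr ⟨hK2, huK'⟩
        · exfalso
          have h1 : (kk * (x * y)) • ω' = x • ω' := hkxyω' kk hk
          have h2 : (kk * (x * y)) • ω' = ω' := pstab_fix Sg huK'
          exact hxω' (h1 ▸ h2)
      · -- g u g⁻¹ = kk * (x*y): impossible since u fixes ω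
        exfalso
        have hueq : u = g⁻¹ * (kk * (x * y)) * g := by
          rw [← hkeq]; group
        have huω : u • ω = ω := hLstab huL
        rw [hueq] at huω
        have : (g⁻¹ * (kk * (x * y)) * g) • ω = g⁻¹ • (x • ω') := by
          rw [mul_smul, mul_smul, hgω, mul_smul, mul_smul, hyω']
          congr 1
          exact pstab_smul_mem Sg hk hxadj
        rw [this] at huω
        have : x • ω' = g • ω := by
          rw [← huω, smul_inv_smul]
        rw [hgω] at this
        exact hxω' this
    · intro n hn
      refine Subgroup.mem_inf.mpr ⟨hKL (hNK hn), mem_conjSG.mpr (hKL (hNK (hgNmem n hn)))⟩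
  -- relindex computation
  have hNrel : N.relIndex K = 2 :=
    relindex_two N K w hwK hwN hw2N (fun b hb => (hKdec b).mp hb)
  have hxyL : x * y ∈ L := (hLdec _).mpr (Or.inr ⟨1, one_mem K, (one_mul _).symm⟩)
  have hKrel : K.relIndex L = 2 :=
    relindex_two K L (x * y) hxyL hxyK hxy (fun b hb => (hLdec b).mp hb)
  have hNL : N ≤ L := le_trans hNK hKL
  have hNrelL : N.relIndex L = 4 := by
    have := Subgroup.relIndex_mul_relIndex N K L hNK hKL
    rw [hNrel, hKrel] at this
    omega
  have hrel4 : (conjSG L g).relIndex L = 4 := by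
    rw [← Subgroup.inf_relIndex_right (conjSG L g) L, inf_comm, hLLg]
    exact hNrelL
  -- Part (i)
  have hpart1 : Subgroup.closure ((L : Set G) ∪ {g}) = ⊤ := by
    set H : Subgroup G := Subgroup.closure ((L : Set G) ∪ {g}) with hHdef
    have hLH : L ≤ H := fun z hz => Subgroup.subset_closure (Or.inl hz)
    have hgH : g ∈ H := Subgroup.subset_closure (Or.inr rfl)
    have hyH : y ∈ H := by
      have : y = g * w * g⁻¹ := hgwg.symm
      rw [this]
      exact mul_mem (mul_mem hgH (hLH (hKL hwK))) (inv_mem hgH)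
    have hxH : x ∈ H := by
      have : x = (x * y) * y⁻¹ := by group
      rw [this]
      exact mul_mem (hLH hxyL) (inv_mem hyH)
    have hstabH : MulAction.stabilizer G ω ≤ H := by
      rw [hgen]
      refine Subgroup.closure_le H |>.mpr ?_
      rintro z (hz | hz)
      · exact hLH (hKL hz)
      · rcases hz with rfl | hz
        · exact hxH
        · rw [Set.mem_singleton_iff] at hz
          rw [hz]
          exact hyH
    have hstep : ∀ (h : G), h ∈ H → ∀ a a' : V, Sg.Adj a a' → h • ω = a →
        ∃ h' ∈ H, h' • ω = a' := by
      intro h hH a a' haa' hωa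
      have hadj2 : Sg.Adj ω (h⁻¹ • a') := by
        have := hact h ω (h⁻¹ • a')
        rw [smul_inv_smul, hωa] at this
        exact this.mp haa'
      obtain ⟨a₀, ha₀ω, ha₀ω'⟩ := harc ω ω' ω (h⁻¹ • a') hadj hadj2
      refine ⟨h * a₀ * g, mul_mem (mul_mem hH (hstabH ha₀ω)) hgH, ?_⟩
      rw [mul_smul, mul_smul, hgω, ha₀ω', smul_inv_smul]
    have htrans : ∀ v : V, ∃ h ∈ H, h • ω = v := by
      have key : ∀ (a b : V) (p : Sg.Walk a b), (∃ h ∈ H, h • ω = a) →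
          ∃ h ∈ H, h • ω = b := by
        intro a b p
        induction p with
        | nil => exact id
        | cons hab p ih =>
          intro ⟨h, hH, hωa⟩
          rename_i u u' u'' _
          exact ih (hstep h hH _ _ hab hωa)
      intro v
      obtain ⟨p⟩ := hconn.preconnected ω v
      exact key ω v p ⟨1, one_mem H, one_smul G ω⟩
    rw [eq_top_iff]
    intro z _
    obtain ⟨h, hH, hωz⟩ := htrans (z • ω)
    have : h⁻¹ * z ∈ MulAction.stabilizer G ω := by
      rw [MulAction.mem_stabilizer_iff, mul_smul, ← hωz, inv_smul_smul]
    have := hstabH this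
    have hz : z = h * (h⁻¹ * z) := by group
    rw [hz]
    exact mul_mem hH this
  -- Part (iii)
  have hpart3 : (L : Set G) *
      ((MulAction.stabilizer G ω ⊓ MulAction.stabilizer G ω' : Subgroup G) : Set G)
      ≠ (MulAction.stabilizer G ω : Set G) := by
    -- choose a neighbour ν of ω different from ω' and x • ω'
    obtain ⟨ν, hνadj, hνne⟩ : ∃ ν ∈ Sg.neighborSet ω, ν ∉ ({ω', x • ω'} : Set V) := by
      by_contra hcon
      push_neg at hcon
      have hsub : Sg.neighborSet ω ⊆ ({ω', x • ω'} : Set V) := hcon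
      have := Set.ncard_le_ncard hsub (Set.toFinite _)
      have h2' : ({ω', x • ω'} : Set V).ncard ≤ 2 := by
        have := Set.ncard_insert_le ω' ({x • ω'} : Set V)
        simpa using this
      rw [hval ω] at this
      omega
    simp only [Set.mem_insert_iff, Set.mem_singleton_iff, not_or] at hνne
    obtain ⟨hν1, hν2⟩ := hνne
    intro hEq
    obtain ⟨a, haω, haω'⟩ := harc ω ω' ω ν hadj hνadj
    have haL : a ∈ (L : Set G) *
        ((MulAction.stabilizer G ω ⊓ MulAction.stabilizer G ω' : Subgroup G) : Set G) := by
      rw [hEq]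
      exact haω
    obtain ⟨l, hl, s', hs', hls⟩ := Set.mem_mul.mp haL
    have hs'ω' : s' • ω' = ω' := (Subgroup.mem_inf.mp hs').2
    have haν : (l * s') • ω' = ν := by rw [hls]; exact haω'
    rw [mul_smul, hs'ω'] at haν
    rcases (hLdec l).mp hl with hlK | ⟨kk, hk, rfl⟩
    · rw [pstab_smul_mem Sg hlK hadj] at haν
      exact hν1 haν.symm
    · rw [hkxyω' kk hk] at haν
      exact hν2 haν.symm
  -- coset graph basics
  have hadjb : ∀ (z h : G), h ∈ L → (cosetGraph L g).Adj ↑z ↑(z * h * g) := by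
    intro z h hh
    refine ⟨?_, z, z * h * g, rfl, rfl, Or.inl ⟨h, hh, 1, one_mem L, by group⟩⟩
    intro hcon
    have : z⁻¹ * (z * h * g) ∈ L := QuotientGroup.eq.mp hcon
    have hgmem : g = h⁻¹ * (z⁻¹ * (z * h * g)) := by group
    rw [hgmem] at hgL
    exact hgL (mul_mem (inv_mem hh) this)
  have hadj_smul : ∀ (z : G) (c c' : G ⧸ L), (cosetGraph L g).Adj c c' →
      (cosetGraph L g).Adj (z • c) (z • c') := by
    intro z c c' hcc
    obtain ⟨hne2, x₀, y₀, hx₀, hy₀, hcase⟩ := hcc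
    refine ⟨fun hcon => hne2 (smul_left_cancel z hcon), z * x₀, z * y₀, ?_, ?_, ?_⟩
    · rw [← hx₀]
      exact (MulAction.Quotient.smul_mk L z x₀).symm
    · rw [← hy₀]
      exact (MulAction.Quotient.smul_mk L z y₀).symm
    · have h1 : (z * x₀)⁻¹ * (z * y₀) = x₀⁻¹ * y₀ := by group
      have h2 : (z * y₀)⁻¹ * (z * x₀) = y₀⁻¹ * x₀ := by group
      rw [h1, h2]
      exact hcase
  have hreach_smul : ∀ (z : G) (c c' : G ⧸ L), (cosetGraph L g).Reachable c c' →
      (cosetGraph L g).Reachable (z • c) (z • c') := by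
    intro z c c' hcc
    exact hcc.map (⟨fun c => z • c, fun h => hadj_smul z _ _ h⟩ :
      cosetGraph L g →g cosetGraph L g)
  have hsmul_mk : ∀ z p : G, z • ((p : G ⧸ L)) = ((z * p : G) : G ⧸ L) := by
    intro z p
    exact MulAction.Quotient.smul_mk L z p
  have hP : ∀ z : G, (cosetGraph L g).Reachable ((1 : G) : G ⧸ L) ((z : G) : G ⧸ L) := by
    intro z
    have hz : z ∈ Subgroup.closure ((L : Set G) ∪ {g}) := by
      rw [hpart1]; trivial
    refine Subgroup.closure_induction
      (p := fun z _ => (cosetGraph L g).Reachable ((1 : G) : G ⧸ L) ((z : G) : G ⧸ L))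
      ?_ ?_ ?_ ?_ hz
    · rintro a (ha | hga)
      · have : ((a : G) : G ⧸ L) = ((1 : G) : G ⧸ L) := by
          rw [QuotientGroup.eq]
          simpa using inv_mem ha
        rw [this]
      · simp only [Set.mem_singleton_iff] at hga
        rw [hga]
        have : (cosetGraph L g).Adj ((1:G) : G ⧸ L) ((1 * 1 * g : G) : G ⧸ L) :=
          hadjb 1 1 (one_mem L)
        rw [one_mul, one_mul] at this
        exact this.reachable
    · rfl
    · intro a b _ _ ha hb
      refine ha.trans ?_
      have := hreach_smul a _ _ hb
      rw [hsmul_mk, hsmul_mk, mul_one] at this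
      exact this
    · intro a _ ha
      have := hreach_smul a⁻¹ _ _ ha
      rw [hsmul_mk, hsmul_mk, mul_one, inv_mul_cancel] at this
      exact this.symm
  have hconn2 : (cosetGraph L g).Connected := by
    constructor
    intro c c'
    obtain ⟨p, rfl⟩ := QuotientGroup.mk_surjective c
    obtain ⟨q, rfl⟩ := QuotientGroup.mk_surjective c'
    exact (hP p).symm.trans (hP q)
  -- valency
  have hNmem_comm : ∀ u : G, u ∈ L → g⁻¹ * u * g ∈ L → u ∈ N := by
    intro u hu hgug
    have hv : g⁻¹ * u * g ∈ N := by
      rw [← hLLg]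
      refine Subgroup.mem_inf.mpr ⟨hgug, mem_conjSG.mpr ?_⟩
      have : g * (g⁻¹ * u * g) * g⁻¹ = u := by group
      rw [this]
      exact hu
    have := hgNmem _ hv
    have heq : g * (g⁻¹ * u * g) * g⁻¹ = u := by group
    rwa [heq] at this
  have hg2L : g ^ 2 ∈ L := hKL hg2
  have hnbhd : ∀ z : G, (cosetGraph L g).neighborSet ((z : G) : G ⧸ L) =
      {b : G ⧸ L | ∃ h ∈ L, b = ((z * h * g : G) : G ⧸ L)} := by
    intro z
    ext b
    constructor
    · intro hb
      obtain ⟨hneq, x₀, y₀, hx₀, hy₀, hcase⟩ := hb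
      have hl₀ : z⁻¹ * x₀ ∈ L := by
        have := QuotientGroup.eq.mp hx₀.symm
        exact this
      rcases hcase with ⟨h, hh, h', hh', heq⟩ | ⟨h, hh, h', hh', heq⟩
      · refine ⟨(z⁻¹ * x₀) * h, mul_mem hl₀ hh, ?_⟩
        rw [← hy₀, QuotientGroup.eq]
        have hy₀eq : y₀ = x₀ * (h * g * h') := by
          rw [← heq]; group
        have hfin : y₀⁻¹ * (z * (z⁻¹ * x₀ * h) * g) = h'⁻¹ := by
          rw [hy₀eq]; group
        rw [hfin]
        exact inv_mem hh'
      · refine ⟨(z⁻¹ * x₀) * h'⁻¹, mul_mem hl₀ (inv_mem hh'), ?_⟩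
        rw [← hy₀, QuotientGroup.eq]
        have hy₀eq : y₀ = x₀ * h'⁻¹ * g⁻¹ * h⁻¹ := by
          have : x₀ = y₀ * (h * g * h') := by rw [← heq]; group
          rw [this]; group
        have hfin : y₀⁻¹ * (z * (z⁻¹ * x₀ * h'⁻¹) * g) = h * (g * g) := by
          rw [hy₀eq]; group
        rw [hfin]
        refine mul_mem hh ?_
        rw [← pow_two]
        exact hg2L
    · rintro ⟨h, hh, rfl⟩
      exact hadjb z h hh
  have hcount : ∀ z : G,
      ({b : G ⧸ L | ∃ h ∈ L, b = ((z * h * g : G) : G ⧸ L)} : Set (G ⧸ L)).ncard = 4 := by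
    intro z
    set M : Subgroup L := N.subgroupOf L with hMdef
    let F : (L ⧸ M) → G ⧸ L := fun c =>
      Quotient.liftOn' c (fun h : L => ((z * h * g : G) : G ⧸ L)) (by
        intro h₁ h₂ hr
        rw [QuotientGroup.leftRel_apply] at hr
        have hn : ((h₁⁻¹ * h₂ : L) : G) ∈ N := hr
        rw [QuotientGroup.eq]
        have hcalc : (z * ↑h₁ * g)⁻¹ * (z * ↑h₂ * g) = g⁻¹ * ((h₁ : G)⁻¹ * h₂) * g := by
          group
        rw [hcalc]
        refine hNL (hgNmem' _ ?_)
        simpa using hn)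
    have hFinj : Function.Injective F := by
      intro c₁ c₂ hc
      induction c₁ using Quotient.inductionOn'
      induction c₂ using Quotient.inductionOn'
      rename_i h₁ h₂
      have hc' : ((z * h₁ * g : G) : G ⧸ L) = ((z * h₂ * g : G) : G ⧸ L) := hc
      rw [QuotientGroup.eq] at hc'
      have hcalc : (z * (h₁ : G) * g)⁻¹ * (z * h₂ * g) = g⁻¹ * ((h₁ : G)⁻¹ * h₂) * g := by
        group
      rw [hcalc] at hc'
      have hmemL : (h₁ : G)⁻¹ * h₂ ∈ L := mul_mem (inv_mem h₁.2) h₂.2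
      have hn : (h₁ : G)⁻¹ * (h₂ : G) ∈ N := hNmem_comm _ hmemL hc'
      apply Quotient.sound'
      rw [QuotientGroup.leftRel_apply]
      exact hn
    have hrange : {b : G ⧸ L | ∃ h ∈ L, b = ((z * h * g : G) : G ⧸ L)} = Set.range F := by
      ext b
      constructor
      · rintro ⟨h, hh, rfl⟩
        exact ⟨Quotient.mk'' (⟨h, hh⟩ : L), rfl⟩
      · rintro ⟨c, rfl⟩
        induction c using Quotient.inductionOn'
        rename_i h
        exact ⟨h, h.2, rfl⟩
    rw [hrange, ← Nat.card_coe_set_eq, Nat.card_range_of_injective hFinj]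
    have : Nat.card (L ⧸ M) = N.relIndex L := by
      rw [Subgroup.relIndex, Subgroup.index_eq_card]
    rw [this, hNrelL]
  refine ⟨hpart1, ⟨by rw [hLLg, hNdef], hrel4⟩, hpart3, hconn2, ?_⟩
  intro v
  obtain ⟨z, rfl⟩ := QuotientGroup.mk_surjective v
  rw [hnbhd z, hcount z]
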